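/- Let f : (0,∞) → (0,∞) and g : (0,∞) → (0,∞) be positive integrable-on-compacts functions such that f(r₂)/f(r₁) ≤ g(r₂)/g(r₁) whenever 0 < r₁ < r₂. Then for 0 ≤ r₀ < r_a ≤ r₁' and 0 ≤ r₀ ≤ r_b < r₁', (∫_{r_b}^{r₁'} f) / (∫_{r₀}^{r_a} f) ≤ (∫_{r_b}^{r₁'} g) / (∫_{r₀}^{r_a} g). -/
import Mathlib


open Set intervalIntegral

lemma integral_ratio_key
    (f g : ℝ → ℝ)
    (hf : ∀ a b : ℝ, 0 ≤ a → IntervalIntegrable f MeasureTheory.volume a b)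
    (hg : ∀ a b : ℝ, 0 ≤ a → IntervalIntegrable g MeasureTheory.volume a b)
    (hratio : ∀ r₁ r₂ : ℝ, 0 < r₁ → r₁ < r₂ → f r₂ * g r₁ ≤ f r₁ * g r₂)
    (a b c d : ℝ) (h0 : 0 ≤ a) (hab : a ≤ b) (hbc : b ≤ c) (hcd : c ≤ d) :
    (∫ y in c..d, f y) * (∫ x in a..b, g x) ≤
      (∫ x in a..b, f x) * (∫ y in c..d, g y) := by
  have hc0 : (0:ℝ) ≤ c := le_trans (le_trans h0 hab) hbc
  have hfab : MeasureTheory.IntegrableOn f (Ioc a b) := (hf a b h0).1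
  have hgab : MeasureTheory.IntegrableOn g (Ioc a b) := (hg a b h0).1
  have hfcd : MeasureTheory.IntegrableOn f (Ioc c d) := (hf c d hc0).1
  have hgcd : MeasureTheory.IntegrableOn g (Ioc c d) := (hg c d hc0).1
  simp only [intervalIntegral.integral_of_le hab, intervalIntegral.integral_of_le hcd]
  -- pointwise inner inequality
  have key : ∀ y ∈ Ioc c d,
      f y * (∫ x in Ioc a b, g x) ≤ g y * (∫ x in Ioc a b, f x) := by
    intro y hy
    have hcy : c < y := hy.1
    rw [← MeasureTheory.integral_const_mul, ← MeasureTheory.integral_const_mul]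
    apply MeasureTheory.setIntegral_mono_on
    · exact hgab.const_mul _
    · exact hfab.const_mul _
    · exact measurableSet_Ioc
    · intro x hx
      have hx0 : 0 < x := lt_of_le_of_lt h0 hx.1
      have hxy : x < y := lt_of_le_of_lt (le_trans hx.2 hbc) hcy
      exact (hratio x y hx0 hxy).trans_eq (mul_comm _ _)
  calc (∫ y in Ioc c d, f y) * (∫ x in Ioc a b, g x)
      = ∫ y in Ioc c d, f y * (∫ x in Ioc a b, g x) := by
        rw [MeasureTheory.integral_mul_const]
    _ ≤ ∫ y in Ioc c d, g y * (∫ x in Ioc a b, f x) := by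
        apply MeasureTheory.setIntegral_mono_on
        · exact hfcd.mul_const _
        · exact hgcd.mul_const _
        · exact measurableSet_Ioc
        · exact key
    _ = (∫ x in Ioc a b, f x) * (∫ y in Ioc c d, g y) := by
        rw [MeasureTheory.integral_mul_const]; ring

/-- Zhu's integral-ratio lemma: If f, g are positive locally
interval-integrable functions on (0,∞) with f(r₂)g(r₁) ≤ f(r₁)g(r₂) for 0 < r₁ < r₂
(i.e. f/g nonincreasing), then for 0 ≤ r₀ < r_a ≤ r₁' and 0 ≤ r₀ ≤ r_b < r₁':
(∫_{r_b}^{r₁'} f)/(∫_{r₀}^{r_a} f) ≤ (∫_{r_b}^{r₁'} g)/(∫_{r₀}^{r_a} g). -/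
theorem integral_ratio_monotone
    (f g : ℝ → ℝ)
    (hf : ∀ a b : ℝ, 0 ≤ a → IntervalIntegrable f MeasureTheory.volume a b)
    (hg : ∀ a b : ℝ, 0 ≤ a → IntervalIntegrable g MeasureTheory.volume a b)
    (hfpos : ∀ r : ℝ, 0 < r → 0 < f r) (hgpos : ∀ r : ℝ, 0 < r → 0 < g r)
    (hratio : ∀ r₁ r₂ : ℝ, 0 < r₁ → r₁ < r₂ → f r₂ * g r₁ ≤ f r₁ * g r₂)
    (r₀ ra rb r₁' : ℝ)
    (h₀a : 0 ≤ r₀) (h₀a' : r₀ < ra) (ha₁ : ra ≤ r₁')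
    (h₀b : r₀ ≤ rb) (hb₁ : rb < r₁') :
    (∫ r in rb..r₁', f r) / (∫ r in r₀..ra, f r) ≤
      (∫ r in rb..r₁', g r) / (∫ r in r₀..ra, g r) := by
  have hb0 : (0:ℝ) ≤ rb := le_trans h₀a h₀b
  have hFA : 0 < ∫ r in r₀..ra, f r :=
    intervalIntegral_pos_of_pos_on (hf r₀ ra h₀a)
      (fun x hx => hfpos x (lt_of_le_of_lt h₀a hx.1)) h₀a'
  have hGA : 0 < ∫ r in r₀..ra, g r :=
    intervalIntegral_pos_of_pos_on (hg r₀ ra h₀a)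
      (fun x hx => hgpos x (lt_of_le_of_lt h₀a hx.1)) h₀a'
  rw [div_le_div_iff₀ hFA hGA]
  -- goal: (∫ B f) * (∫ A g) ≤ (∫ B g) * (∫ A f)
  rcases le_or_gt ra rb with h | h
  · have := integral_ratio_key f g hf hg hratio r₀ ra rb r₁' h₀a h₀a'.le h hb₁.le
    nlinarith [this]
  · -- rb < ra : split intervals at rb and ra
    have hFsplitA : (∫ r in r₀..rb, f r) + (∫ r in rb..ra, f r) = ∫ r in r₀..ra, f r :=
      intervalIntegral.integral_add_adjacent_intervals (hf r₀ rb h₀a) (hf rb ra hb0)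
    have hGsplitA : (∫ r in r₀..rb, g r) + (∫ r in rb..ra, g r) = ∫ r in r₀..ra, g r :=
      intervalIntegral.integral_add_adjacent_intervals (hg r₀ rb h₀a) (hg rb ra hb0)
    have hFsplitB : (∫ r in rb..ra, f r) + (∫ r in ra..r₁', f r) = ∫ r in rb..r₁', f r :=
      intervalIntegral.integral_add_adjacent_intervals (hf rb ra hb0) (hf ra r₁' (hb0.trans h.le))
    have hGsplitB : (∫ r in rb..ra, g r) + (∫ r in ra..r₁', g r) = ∫ r in rb..r₁', g r :=
      intervalIntegral.integral_add_adjacent_intervals (hg rb ra hb0) (hg ra r₁' (hb0.trans h.le))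
    have k1 := integral_ratio_key f g hf hg hratio r₀ rb rb ra h₀a h₀b le_rfl h.le
    have k2 := integral_ratio_key f g hf hg hratio r₀ rb ra r₁' h₀a h₀b h.le ha₁
    have k3 := integral_ratio_key f g hf hg hratio rb ra ra r₁' hb0 h.le le_rfl ha₁
    rw [← hFsplitA, ← hGsplitA, ← hFsplitB, ← hGsplitB]
    ring_nf
    ring_nf at k1 k2 k3
    linarith [k1, k2, k3]
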